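/- Let μ be a valuation on K[x] extending v admitting a key polynomial (a monic polynomial that is both μ-minimal and μ-irreducible), and let φ be a key polynomial of minimal degree. Then for every monic nonconstant f ∈ K[x], μ(f)/deg(f) ≤ μ(φ)/deg(φ), with equality if and only if f is μ-minimal. -/

import Mathlib

open Polynomial

section Preamble

variable {Λ : Type*} [AddCommGroup Λ] [LinearOrder Λ] [IsOrderedAddMonoid Λ]

/-- A (Krull) valuation on a commutative ring, written additively, with value `⊤` at `0`. -/
def IsVal {R : Type*} [CommRing R] (μ : R → WithTop Λ) : Prop :=
  μ 0 = ⊤ ∧ μ 1 = 0 ∧ (∀ a b, μ (a * b) = μ a + μ b) ∧ ∀ a b, min (μ a) (μ b) ≤ μ (a + b)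

variable {K : Type*} [Field K]

/-- `μ` is a valuation on `K[x]` whose restriction to `K` is `v`. -/
def ExtendsVal (v : K → WithTop Λ) (μ : Polynomial K → WithTop Λ) : Prop :=
  ∀ a : K, μ (Polynomial.C a) = v a

/-- `a ∼_μ b`: the initial terms of `a` and `b` in the graded algebra of `μ` coincide. -/
def MuEquiv (μ : Polynomial K → WithTop Λ) (a b : Polynomial K) : Prop :=
  (μ a = μ b ∧ μ a < μ (a - b)) ∨ (μ a = ⊤ ∧ μ b = ⊤)

/-- `h ∣_μ g` : the initial term of `h` divides the initial term of `g` in the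
graded algebra `G_μ`. -/
def MuDvd (μ : Polynomial K → WithTop Λ) (h g : Polynomial K) : Prop :=
  ∃ c, MuEquiv μ (h * c) g

/-- `g` is `μ`-minimal: `g ∤_μ f` for all nonzero `f` of degree smaller than `deg g`. -/
def MuMinimal (μ : Polynomial K → WithTop Λ) (g : Polynomial K) : Prop :=
  ∀ f : Polynomial K, f ≠ 0 → f.degree < g.degree → ¬ MuDvd μ g f

/-- `g` is `μ`-irreducible: the principal ideal of `G_μ` generated by the initial term of `g`
is a nonzero prime ideal. -/
def MuIrreducible (μ : Polynomial K → WithTop Λ) (g : Polynomial K) : Prop :=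
  μ g ≠ ⊤ ∧ ¬ MuDvd μ g 1 ∧ ∀ a b : Polynomial K, MuDvd μ g (a * b) → MuDvd μ g a ∨ MuDvd μ g b

/-- A (MacLane–Vaquié) key polynomial for `μ`: monic, `μ`-minimal and `μ`-irreducible. -/
def IsKeyPol (μ : Polynomial K → WithTop Λ) (φ : Polynomial K) : Prop :=
  φ.Monic ∧ MuMinimal μ φ ∧ MuIrreducible μ φ

/-- A key polynomial for `μ` of minimal degree. -/
def MinKeyPol (μ : Polynomial K → WithTop Λ) (φ : Polynomial K) : Prop :=
  IsKeyPol μ φ ∧ ∀ ψ : Polynomial K, IsKeyPol μ ψ → φ.degree ≤ ψ.degree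

/-- The coefficients of the `g`-adic expansion `f = ∑ a_s g^s`, `deg a_s < deg g`. -/
noncomputable def adicCoeff (g : Polynomial K) : Polynomial K → ℕ → Polynomial K
  | f, 0 => f %ₘ g
  | f, (s + 1) => adicCoeff g (f /ₘ g) s

/-- The truncation `μ_g` of `μ` : `μ_g (∑ a_s g^s) = min_s μ (a_s g^s)`. -/
noncomputable def truncVal (μ : Polynomial K → WithTop Λ) (g f : Polynomial K) : WithTop Λ :=
  (Finset.range (f.natDegree + 1)).inf fun s => μ (adicCoeff g f s * g ^ s)

/-- The augmented valuation `[μ; φ, γ]`, acting on `φ`-expansions by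
`ν(∑ a_s φ^s) = min_s (μ(a_s) + s γ)`. -/
noncomputable def augVal (μ : Polynomial K → WithTop Λ) (φ : Polynomial K) (γ : WithTop Λ)
    (f : Polynomial K) : WithTop Λ :=
  (Finset.range (f.natDegree + 1)).inf fun s => μ (adicCoeff φ f s) + s • γ

end Preamble

/- ---------------------------------------------------------------------------
Auxiliary development for the proof of `weight_bound`.
--------------------------------------------------------------------------- -/

section AuxWB

variable {K : Type*} [Field K] {Λ : Type*} [AddCommGroup Λ] [LinearOrder Λ] [IsOrderedAddMonoid Λ]
variable {v : K → WithTop Λ} {μ : Polynomial K → WithTop Λ}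

namespace WB

/-! ### `WithTop` helpers -/

lemma wt_self_add_eq_zero {a : WithTop Λ} (h : a + a = 0) : a = 0 := by
  cases a with
  | top => simp at h
  | coe x =>
    have hx : x + x = 0 := by exact_mod_cast h
    have : x = 0 := by
      rcases lt_trichotomy x 0 with h1 | h1 | h1
      · exact absurd hx (ne_of_lt (by simpa using add_lt_add h1 h1))
      · exact h1
      · exact absurd hx (ne_of_gt (by simpa using add_lt_add h1 h1))
    exact_mod_cast this

lemma wt_nsmul_coe (k : ℕ) (a : Λ) : (k • (a : WithTop Λ)) = ((k • a : Λ) : WithTop Λ) := by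
  induction k with
  | zero => simp
  | succ n ih => rw [succ_nsmul, succ_nsmul, ih, WithTop.coe_add]

lemma wt_nsmul_top {k : ℕ} (hk : k ≠ 0) : (k • (⊤ : WithTop Λ)) = ⊤ := by
  cases k with
  | zero => exact absurd rfl hk
  | succ n => rw [succ_nsmul]; exact add_top _

lemma wt_nsmul_le_cancel {k : ℕ} (hk : k ≠ 0) {a b : WithTop Λ}
    (h : k • a ≤ k • b) : a ≤ b := by
  cases b with
  | top => exact le_top
  | coe y =>
    cases a with
    | top =>
      rw [wt_nsmul_top hk, top_le_iff, wt_nsmul_coe] at h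
      exact (WithTop.coe_ne_top h).elim
    | coe x =>
      rw [wt_nsmul_coe, wt_nsmul_coe, WithTop.coe_le_coe] at h
      by_contra hc
      rw [WithTop.coe_le_coe, not_le] at hc
      exact absurd h (not_le.mpr (nsmul_lt_nsmul_right hk hc))

lemma wt_nsmul_eq_cancel {k : ℕ} (hk : k ≠ 0) {a b : WithTop Λ}
    (h : k • a = k • b) : a = b :=
  le_antisymm (wt_nsmul_le_cancel hk h.le) (wt_nsmul_le_cancel hk h.ge)

/-! ### Basic valuation facts -/

section Basics

variable (hv : IsVal v) (hμ : IsVal μ) (hext : ExtendsVal v μ)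

include hv hμ hext

lemma mu_neg (a : Polynomial K) : μ (-a) = μ a := by
  have hv1 : v (-1 : K) = 0 := by
    have h2 : v (-1 : K) + v (-1 : K) = 0 := by
      rw [← hv.2.2.1]; norm_num; exact hv.2.1
    exact wt_self_add_eq_zero h2
  have : (-a : Polynomial K) = Polynomial.C (-1) * a := by
    rw [map_neg, map_one]; ring
  rw [this, hμ.2.2.1, hext, hv1, zero_add]

lemma mu_sub_ge (a b : Polynomial K) : min (μ a) (μ b) ≤ μ (a - b) := by
  have := hμ.2.2.2 a (-b)
  rw [mu_neg hv hμ hext b] at this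
  simpa [sub_eq_add_neg] using this

lemma mu_add_eq_left {a b : Polynomial K} (h : μ a < μ b) : μ (a + b) = μ a := by
  have hge : μ a ≤ μ (a + b) := by
    have := hμ.2.2.2 a b
    rwa [min_eq_left h.le] at this
  refine le_antisymm ?_ hge
  by_contra hc
  rw [not_le] at hc
  have h2 : min (μ (a + b)) (μ b) ≤ μ ((a + b) - b) := mu_sub_ge hv hμ hext _ _
  simp only [add_sub_cancel_right] at h2
  exact absurd (lt_min hc h) (not_lt.mpr h2)

lemma mu_pow (a : Polynomial K) (k : ℕ) : μ (a ^ k) = k • μ a := by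
  induction k with
  | zero => simpa using hμ.2.1
  | succ n ih => rw [pow_succ, hμ.2.2.1, ih, succ_nsmul]

end Basics


/-! ### Key polynomial: no support, division estimates -/

section Key

variable (hv : IsVal v) (hμ : IsVal μ) (hext : ExtendsVal v μ)
variable {φ : Polynomial K} (hmo : φ.Monic) (hmin : MuMinimal μ φ) (htop : μ φ ≠ ⊤)
  (hd : 0 < φ.natDegree)

include hv hμ hext hmo hmin htop hd

lemma mu_ne_top_aux : ∀ (n : ℕ) (h : Polynomial K), h.natDegree ≤ n → h ≠ 0 → μ h ≠ ⊤ := by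
  intro n
  induction n with
  | zero =>
    intro h hle h0 htop0
    have hsm : h.natDegree < φ.natDegree := by omega
    have hdeg : h.degree < φ.degree := by
      rw [degree_eq_natDegree h0, degree_eq_natDegree hmo.ne_zero]
      exact_mod_cast hsm
    exact hmin h h0 hdeg ⟨h, Or.inr ⟨by rw [hμ.2.2.1, htop0, add_top], htop0⟩⟩
  | succ n IH =>
    intro h hle h0 htop0
    by_cases hsm : h.natDegree < φ.natDegree
    · have hdeg : h.degree < φ.degree := by
        rw [degree_eq_natDegree h0, degree_eq_natDegree hmo.ne_zero]
        exact_mod_cast hsm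
      exact hmin h h0 hdeg ⟨h, Or.inr ⟨by rw [hμ.2.2.1, htop0, add_top], htop0⟩⟩
    · push_neg at hsm
      have hq0 : h /ₘ φ ≠ 0 := by
        rw [Ne, divByMonic_eq_zero_iff hmo, degree_eq_natDegree h0,
          degree_eq_natDegree hmo.ne_zero]
        exact not_lt.mpr (by exact_mod_cast hsm)
      have hqd : (h /ₘ φ).natDegree ≤ n := by
        rw [natDegree_divByMonic h hmo]; omega
      have hqtop : μ (h /ₘ φ) ≠ ⊤ := IH _ hqd hq0
      have hdiv : h %ₘ φ + φ * (h /ₘ φ) = h := modByMonic_add_div h φ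
      have hμφq : μ (φ * (h /ₘ φ)) = μ φ + μ (h /ₘ φ) := hμ.2.2.1 _ _
      have htne : μ φ + μ (h /ₘ φ) ≠ ⊤ := WithTop.add_ne_top.mpr ⟨htop, hqtop⟩
      by_cases hr0 : h %ₘ φ = 0
      · rw [hr0, zero_add] at hdiv
        rw [← hdiv, hμφq] at htop0
        exact htne htop0
      · have hrd : (h %ₘ φ).natDegree ≤ n := by
          have h1 := natDegree_lt_natDegree hr0 (degree_modByMonic_lt h hmo)
          omega
        have hrge : μ φ + μ (h /ₘ φ) ≤ μ (h %ₘ φ) := by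
          have h2 : min (μ h) (μ (φ * (h /ₘ φ))) ≤ μ (h - φ * (h /ₘ φ)) :=
            mu_sub_ge hv hμ hext _ _
          have h3 : h - φ * (h /ₘ φ) = h %ₘ φ := by linear_combination -hdiv
          rw [h3, htop0, hμφq] at h2
          simpa using h2
        rcases eq_or_lt_of_le hrge with heq | hlt
        · refine hmin (-(h %ₘ φ)) (neg_ne_zero.mpr hr0) ?_ ⟨h /ₘ φ, Or.inl ⟨?_, ?_⟩⟩
          · rw [degree_neg]; exact degree_modByMonic_lt h hmo
          · rw [hμ.2.2.1, mu_neg hv hμ hext, ← heq]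
          · have h4 : φ * (h /ₘ φ) - -(h %ₘ φ) = h := by linear_combination hdiv
            rw [h4, htop0, hμ.2.2.1]
            exact lt_top_iff_ne_top.mpr htne
        · have h5 : μ (φ * (h /ₘ φ) + h %ₘ φ) = μ (φ * (h /ₘ φ)) :=
            mu_add_eq_left hv hμ hext (by rw [hμφq]; exact hlt)
          rw [show φ * (h /ₘ φ) + h %ₘ φ = h by linear_combination hdiv, htop0, hμφq] at h5
          exact htne h5.symm

lemma mu_ne_top {h : Polynomial K} (h0 : h ≠ 0) : μ h ≠ ⊤ :=
  mu_ne_top_aux hv hμ hext hmo hmin htop hd h.natDegree h le_rfl h0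

end Key

/-! ### Division minimum formula and degree-multiple bound -/

section Steps

variable (hv : IsVal v) (hμ : IsVal μ) (hext : ExtendsVal v μ)
variable (S : ∀ h : Polynomial K, h ≠ 0 → μ h ≠ ⊤)

include hv hμ hext S

lemma step_min {ψ : Polynomial K} (hψmin : MuMinimal μ ψ)
    (Q R : Polynomial K) (hR : R.degree < ψ.degree) :
    μ (Q * ψ + R) = min (μ (Q * ψ)) (μ R) := by
  rcases lt_trichotomy (μ (Q * ψ)) (μ R) with hlt | heq | hgt
  · rw [mu_add_eq_left hv hμ hext hlt, min_eq_left hlt.le]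
  · by_cases ht : μ R = ⊤
    · have hR0 : R = 0 := by
        by_contra h0
        exact S R h0 ht
      rw [hR0, add_zero, hμ.1]
      simp
    · have hR0 : R ≠ 0 := fun h0 => ht (by rw [h0]; exact hμ.1)
      rw [heq, min_self]
      refine le_antisymm ?_ (by
        have := hμ.2.2.2 (Q * ψ) R
        rwa [heq, min_self] at this)
      by_contra hc
      rw [not_le] at hc
      refine hψmin (-R) (neg_ne_zero.mpr hR0) (by rw [degree_neg]; exact hR)
        ⟨Q, Or.inl ⟨?_, ?_⟩⟩
      · rw [mul_comm, heq, mu_neg hv hμ hext]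
      · rw [show ψ * Q - -R = Q * ψ + R by ring, mul_comm ψ Q, heq]
        exact hc
  · rw [add_comm, mu_add_eq_left hv hμ hext hgt, min_eq_right hgt.le]

lemma val_deg_mul {ψ : Polynomial K} (hψmo : ψ.Monic) (hψmin : MuMinimal μ ψ) :
    ∀ (k : ℕ) (h : Polynomial K), h.Monic → h.natDegree = k * ψ.natDegree →
      μ h ≤ k • μ ψ := by
  intro k
  induction k with
  | zero =>
    intro h hm hdeg
    rw [zero_mul] at hdeg
    rw [hm.natDegree_eq_zero.mp hdeg, hμ.2.1]
    simp
  | succ n ih =>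
    intro h hm hdeg
    have hdge : ψ.natDegree ≤ h.natDegree := by
      rw [hdeg]; exact Nat.le_mul_of_pos_left _ (Nat.succ_pos n)
    have hdegle : ψ.degree ≤ h.degree := by
      rw [degree_eq_natDegree hψmo.ne_zero, degree_eq_natDegree hm.ne_zero]
      exact_mod_cast hdge
    have hqm : (h /ₘ ψ).Monic := by
      unfold Polynomial.Monic
      rw [leadingCoeff_divByMonic_of_monic hψmo hdegle]
      exact hm
    have hqd : (h /ₘ ψ).natDegree = n * ψ.natDegree := by
      rw [natDegree_divByMonic h hψmo, hdeg, Nat.succ_mul]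
      omega
    have hsum : h /ₘ ψ * ψ + h %ₘ ψ = h := by
      linear_combination modByMonic_add_div h ψ
    have hstep := step_min hv hμ hext S hψmin (h /ₘ ψ) (h %ₘ ψ)
      (degree_modByMonic_lt h hψmo)
    rw [hsum] at hstep
    calc μ h = min (μ (h /ₘ ψ * ψ)) (μ (h %ₘ ψ)) := hstep
      _ ≤ μ (h /ₘ ψ * ψ) := min_le_left _ _
      _ = μ (h /ₘ ψ) + μ ψ := hμ.2.2.1 _ _
      _ ≤ n • μ ψ + μ ψ := add_le_add_left (ih (h /ₘ ψ) hqm hqd) _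
      _ = (n + 1) • μ ψ := (succ_nsmul _ _).symm

lemma weightA {φ : Polynomial K} (hmin : MuMinimal μ φ) (hmo : φ.Monic)
    (f : Polynomial K) (hf : f.Monic) :
    φ.natDegree • μ f ≤ f.natDegree • μ φ := by
  have := val_deg_mul hv hμ hext S hmo hmin f.natDegree (f ^ φ.natDegree)
    (hf.pow _) (by rw [natDegree_pow, Nat.mul_comm])
  rwa [mu_pow hv hμ hext] at this

end Steps


/-! ### The initial-degree function `dg` -/

def dgSet (μ : Polynomial K → WithTop Λ) (x : Polynomial K) : Set ℕ :=
  {d | ∃ w e : Polynomial K, x = w + e ∧ μ x < μ e ∧ w ≠ 0 ∧ w.natDegree = d}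

noncomputable def dg (μ : Polynomial K → WithTop Λ) (x : Polynomial K) : ℕ :=
  sInf (dgSet μ x)

section Dg

variable (hv : IsVal v) (hμ : IsVal μ) (hext : ExtendsVal v μ)

lemma dgSet_nonempty (hμ : IsVal μ) {x : Polynomial K} (hx : μ x ≠ ⊤) :
    (dgSet μ x).Nonempty := by
  refine ⟨x.natDegree, x, 0, (add_zero x).symm, ?_, fun h => hx (by rw [h]; exact hμ.1), rfl⟩
  rw [hμ.1]
  exact lt_top_iff_ne_top.mpr hx

lemma dg_le {x w e : Polynomial K} (hsum : x = w + e) (hlt : μ x < μ e) (hw : w ≠ 0) :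
    dg μ x ≤ w.natDegree :=
  Nat.sInf_le ⟨w, e, hsum, hlt, hw, rfl⟩

lemma dg_spec (hμ : IsVal μ) {x : Polynomial K} (hx : μ x ≠ ⊤) :
    ∃ w e : Polynomial K, x = w + e ∧ μ x < μ e ∧ w ≠ 0 ∧ w.natDegree = dg μ x :=
  Nat.sInf_mem (dgSet_nonempty hμ hx)

lemma dg_le_natDegree (hμ : IsVal μ) {x : Polynomial K} (hx : μ x ≠ ⊤) :
    dg μ x ≤ x.natDegree :=
  dg_le (x := x) (w := x) (e := 0) (add_zero x).symm
    (by rw [hμ.1]; exact lt_top_iff_ne_top.mpr hx) (fun h => hx (by rw [h]; exact hμ.1))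

include hv hμ hext

lemma wit_mu {x w e : Polynomial K} (hsum : x = w + e) (hlt : μ x < μ e) : μ w = μ x := by
  have h1 : μ x ≤ μ w := by
    have h2 : min (μ x) (μ e) ≤ μ (x - e) := mu_sub_ge hv hμ hext _ _
    have h3 : x - e = w := by rw [hsum]; ring
    rwa [h3, min_eq_left hlt.le] at h2
  refine le_antisymm ?_ h1
  by_contra hc
  rw [not_le] at hc
  have h3 := hμ.2.2.2 w e
  rw [← hsum] at h3
  exact absurd (lt_min hc hlt) (not_lt.mpr h3)

lemma dg_congr {x y e : Polynomial K} (hsum : x = y + e) (hlt : μ x < μ e)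
    (hx : μ x ≠ ⊤) : dg μ x = dg μ y := by
  have hymu : μ y = μ x := wit_mu hv hμ hext hsum hlt
  have hy : μ y ≠ ⊤ := by rw [hymu]; exact hx
  apply le_antisymm
  · obtain ⟨w, ey, hysum, hylt, hw0, hwdeg⟩ := dg_spec hμ hy
    have h4 : x = w + (ey + e) := by rw [hsum, hysum]; ring
    refine le_of_le_of_eq (dg_le h4 ?_ hw0) hwdeg
    calc μ x < min (μ ey) (μ e) := lt_min (hymu ▸ hylt) hlt
      _ ≤ μ (ey + e) := hμ.2.2.2 _ _
  · obtain ⟨w, ex, hxsum, hxlt, hw0, hwdeg⟩ := dg_spec hμ hx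
    have h4 : y = w + (ex - e) := by linear_combination hxsum - hsum
    refine le_of_le_of_eq (dg_le h4 ?_ hw0) hwdeg
    rw [hymu]
    calc μ x < min (μ ex) (μ e) := lt_min hxlt hlt
      _ ≤ μ (ex - e) := mu_sub_ge hv hμ hext _ _

lemma dg_mul_le {x y : Polynomial K} (hx : μ x ≠ ⊤) (hy : μ y ≠ ⊤) :
    dg μ (x * y) ≤ dg μ x + dg μ y := by
  obtain ⟨wx, ex, hxsum, hxlt, hwx0, hwxdeg⟩ := dg_spec hμ hx
  obtain ⟨wy, ey, hysum, hylt, hwy0, hwydeg⟩ := dg_spec hμ hy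
  have hμxy : μ (x * y) = μ x + μ y := hμ.2.2.1 _ _
  have hmuwx : μ wx = μ x := wit_mu hv hμ hext hxsum hxlt
  have hmuwy : μ wy = μ y := wit_mu hv hμ hext hysum hylt
  have hsum : x * y = wx * wy + (wx * ey + ex * wy + ex * ey) := by
    rw [hxsum, hysum]; ring
  have t1 : μ (x * y) < μ (wx * ey) := by
    rw [hμxy, hμ.2.2.1, hmuwx]
    exact WithTop.add_lt_add_left hx hylt
  have t2 : μ (x * y) < μ (ex * wy) := by
    rw [hμxy, hμ.2.2.1, hmuwy]
    exact WithTop.add_lt_add_right hy hxlt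
  have t3 : μ (x * y) < μ (ex * ey) := by
    rw [hμxy, hμ.2.2.1]
    exact lt_of_lt_of_le (WithTop.add_lt_add_right hy hxlt) (add_le_add_right hylt.le _)
  have hE : μ (x * y) < μ (wx * ey + ex * wy + ex * ey) := by
    calc μ (x * y) < min (min (μ (wx * ey)) (μ (ex * wy))) (μ (ex * ey)) :=
          lt_min (lt_min t1 t2) t3
      _ ≤ min (μ (wx * ey + ex * wy)) (μ (ex * ey)) := min_le_min (hμ.2.2.2 _ _) le_rfl
      _ ≤ μ (wx * ey + ex * wy + ex * ey) := hμ.2.2.2 _ _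
  have := dg_le hsum hE (mul_ne_zero hwx0 hwy0)
  rwa [natDegree_mul hwx0 hwy0, hwxdeg, hwydeg] at this

end Dg


/-! ### The main induction -/

section Main

variable (hv : IsVal v) (hμ : IsVal μ) (hext : ExtendsVal v μ)
variable {φ : Polynomial K} (hmo : φ.Monic) (hmin : MuMinimal μ φ) (htop : μ φ ≠ ⊤)
  (hd : 0 < φ.natDegree) (S : ∀ h : Polynomial K, h ≠ 0 → μ h ≠ ⊤)

include hv hμ hext hmo hmin htop hd S

lemma main_core (N : ℕ)
    (IH : ∀ M, M < N → ∀ f q w e : Polynomial K, f.Monic →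
      f.natDegree = M * φ.natDegree → μ f = M • μ φ → q ≠ 0 → q * f = w + e →
      μ (q * f) < μ e → dg μ q + M * φ.natDegree ≤ w.natDegree)
    (f q w e : Polynomial K) (hfm : f.Monic) (hfd : f.natDegree = N * φ.natDegree)
    (hfv : μ f = N • μ φ) (hq0 : q ≠ 0) (hsum : q * f = w + e)
    (hlt : μ (q * f) < μ e) (hqred : q.natDegree = dg μ q) :
    dg μ q + N * φ.natDegree ≤ w.natDegree := by
  have hμq : μ q ≠ ⊤ := S q hq0
  have hf0 : f ≠ 0 := hfm.ne_zero
  have hμf : μ f ≠ ⊤ := S f hf0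
  have hμqf : μ (q * f) = μ q + μ f := hμ.2.2.1 _ _
  rcases Nat.eq_zero_or_pos N with hN0 | hNpos
  · subst hN0
    have hf1 : f = 1 := hfm.natDegree_eq_zero.mp (by rw [hfd]; ring)
    rw [hf1, mul_one] at hsum hlt
    have hw0 : w ≠ 0 := by
      rintro rfl
      rw [zero_add] at hsum
      rw [hsum] at hlt
      exact lt_irrefl _ hlt
    have := dg_le (μ := μ) hsum hlt hw0
    simpa using this
  · obtain ⟨N', rfl⟩ : ∃ N', N = N' + 1 := ⟨N - 1, by omega⟩
    set f₁ := f /ₘ φ with hf₁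
    set f₀ := f %ₘ φ with hf₀
    set q₁ := q /ₘ φ with hq₁
    set q₀ := q %ₘ φ with hq₀
    set w₁ := w /ₘ φ with hw₁
    set w₀ := w %ₘ φ with hw₀
    set β := (q₀ * f₀) /ₘ φ with hβ
    set α := (q₀ * f₀) %ₘ φ with hα
    have hdivf : f₀ + φ * f₁ = f := modByMonic_add_div f φ
    have hdivq : q₀ + φ * q₁ = q := modByMonic_add_div q φ
    have hdivw : w₀ + φ * w₁ = w := modByMonic_add_div w φ
    have hdivp : α + φ * β = q₀ * f₀ := modByMonic_add_div _ φ
    have hfdge : φ.natDegree ≤ f.natDegree := by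
      rw [hfd]; exact Nat.le_mul_of_pos_left _ (by omega)
    have hdegle : φ.degree ≤ f.degree := by
      rw [degree_eq_natDegree hmo.ne_zero, degree_eq_natDegree hf0]
      exact_mod_cast hfdge
    have hf₁m : f₁.Monic := by
      unfold Polynomial.Monic
      rw [hf₁, leadingCoeff_divByMonic_of_monic hmo hdegle]
      exact hfm
    have hf₁d : f₁.natDegree = N' * φ.natDegree := by
      rw [hf₁, natDegree_divByMonic f hmo, hfd, Nat.succ_mul]; omega
    have hf₁le : μ f₁ ≤ N' • μ φ := val_deg_mul hv hμ hext S hmo hmin N' f₁ hf₁m hf₁d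
    have hff : f₁ * φ + f₀ = f := by linear_combination hdivf
    have hstepf : μ f = min (μ (f₁ * φ)) (μ f₀) := by
      rw [← step_min hv hμ hext S hmin f₁ f₀ (degree_modByMonic_lt f hmo), hff]
    have hf₁v : μ f₁ = N' • μ φ := by
      refine le_antisymm hf₁le ?_
      have h1 : μ f ≤ μ (f₁ * φ) := by rw [hstepf]; exact min_le_left _ _
      rw [hfv, hμ.2.2.1, succ_nsmul] at h1
      exact (WithTop.add_le_add_iff_right htop).mp h1
    have hid : q * f = (q * f₁ + q₁ * f₀ + β) * φ + α := by
      linear_combination (-q) * hdivf + (-f₀) * hdivq - hdivp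
    have hE : e = (q * f₁ + (q₁ * f₀ + β - w₁)) * φ + (α - w₀) := by
      linear_combination hid - hsum + hdivw
    have hRdeg : (α - w₀).degree < φ.degree :=
      lt_of_le_of_lt (degree_sub_le _ _)
        (max_lt (degree_modByMonic_lt _ hmo) (degree_modByMonic_lt _ hmo))
    have hstepE : μ e = min (μ ((q * f₁ + (q₁ * f₀ + β - w₁)) * φ)) (μ (α - w₀)) := by
      rw [hE]; exact step_min hv hμ hext S hmin _ _ hRdeg
    have hQ'gt : μ (q * f₁) < μ (q * f₁ + (q₁ * f₀ + β - w₁)) := by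
      have h1 : μ (q * f) < μ ((q * f₁ + (q₁ * f₀ + β - w₁)) * φ) :=
        lt_of_lt_of_le hlt (by rw [hstepE]; exact min_le_left _ _)
      rw [show μ ((q * f₁ + (q₁ * f₀ + β - w₁)) * φ)
            = μ (q * f₁ + (q₁ * f₀ + β - w₁)) + μ φ from hμ.2.2.1 _ _,
          show μ (q * f) = (μ q + N' • μ φ) + μ φ by
            rw [hμqf, hfv, succ_nsmul, ← add_assoc]] at h1
      have h3 := (WithTop.add_lt_add_iff_right htop).mp h1
      rw [show μ (q * f₁) = μ q + N' • μ φ by rw [hμ.2.2.1, hf₁v]]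
      exact h3
    have hW'rel : q * f₁ = (w₁ - (q₁ * f₀ + β)) + (q * f₁ + (q₁ * f₀ + β - w₁)) := by
      ring
    have hW'0 : w₁ - (q₁ * f₀ + β) ≠ 0 := by
      intro h0
      rw [h0, zero_add] at hW'rel
      rw [← hW'rel] at hQ'gt
      exact lt_irrefl _ hQ'gt
    have hIH := IH N' (by omega) f₁ q (w₁ - (q₁ * f₀ + β)) (q * f₁ + (q₁ * f₀ + β - w₁))
      hf₁m hf₁d hf₁v hq0 hW'rel hQ'gt
    -- degree analysis
    have hcast : ∀ p : Polynomial K, p ≠ 0 → (p.degree < φ.degree ↔ p.natDegree < φ.natDegree) := by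
      intro p hp
      rw [degree_eq_natDegree hp, degree_eq_natDegree hmo.ne_zero]
      exact_mod_cast Iff.rfl
    have key : q₁ * f₀ + β = 0 ∨
        (q₁ * f₀ + β).natDegree < (w₁ - (q₁ * f₀ + β)).natDegree := by
      by_cases hP0 : q₁ * f₀ + β = 0
      · exact Or.inl hP0
      right
      refine lt_of_lt_of_le ?_ hIH
      -- natDegree (q₁ * f₀ + β) < q.natDegree + N' * φ.natDegree
      have hmax := natDegree_add_le (q₁ * f₀) β
      by_cases hkm : q.natDegree < φ.natDegree
      · -- q₁ = 0, so P = β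
        have hq₁0 : q₁ = 0 := by
          rw [hq₁, divByMonic_eq_zero_iff hmo]
          exact (hcast q hq0).mpr hkm
        rw [hq₁0, zero_mul, zero_add] at hP0 ⊢
        -- bound β
        have hq₀f₀ : q₀ * f₀ ≠ 0 := by
          intro hz
          apply hP0
          rw [hβ, hz, zero_divByMonic]
        have hf₀0 : f₀ ≠ 0 := fun hz => hq₀f₀ (by rw [hz, mul_zero])
        have hq₀0 : q₀ ≠ 0 := fun hz => hq₀f₀ (by rw [hz, zero_mul])
        have hq₀q : q₀ = q := by
          rw [hq₀, modByMonic_eq_self_iff hmo]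
          exact (hcast q hq0).mpr hkm
        have hβd : β.natDegree = (q₀ * f₀).natDegree - φ.natDegree :=
          natDegree_divByMonic _ hmo
        have hβ0 : β ≠ 0 := hP0
        have hge : φ.natDegree ≤ (q₀ * f₀).natDegree := by
          by_contra hc
          push_neg at hc
          apply hβ0
          rw [hβ, divByMonic_eq_zero_iff hmo]
          exact (hcast _ hq₀f₀).mpr hc
        have hmul : (q₀ * f₀).natDegree = q₀.natDegree + f₀.natDegree :=
          natDegree_mul hq₀0 hf₀0
        have hf₀lt : f₀.natDegree < φ.natDegree :=
          natDegree_lt_natDegree hf₀0 (degree_modByMonic_lt f hmo)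
        have hq₀deg : q₀.natDegree = q.natDegree := by rw [hq₀q]
        omega
      · -- q.natDegree ≥ φ.natDegree
        push_neg at hkm
        have hb1 : (q₁ * f₀).natDegree < q.natDegree + N' * φ.natDegree := by
          by_cases hz : q₁ * f₀ = 0
          · rw [hz, natDegree_zero]; omega
          have hq₁0 : q₁ ≠ 0 := fun hq => hz (by rw [hq, zero_mul])
          have hf₀0 : f₀ ≠ 0 := fun hq => hz (by rw [hq, mul_zero])
          have h1 : (q₁ * f₀).natDegree = q₁.natDegree + f₀.natDegree :=
            natDegree_mul hq₁0 hf₀0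
          have h2 : q₁.natDegree = q.natDegree - φ.natDegree :=
            natDegree_divByMonic _ hmo
          have h3 : f₀.natDegree < φ.natDegree :=
            natDegree_lt_natDegree hf₀0 (degree_modByMonic_lt f hmo)
          omega
        have hb2 : β.natDegree < q.natDegree + N' * φ.natDegree := by
          by_cases hz : β = 0
          · rw [hz, natDegree_zero]; omega
          have hq₀f₀ : q₀ * f₀ ≠ 0 := by
            intro h0
            apply hz
            rw [hβ, h0, zero_divByMonic]
          have hf₀0 : f₀ ≠ 0 := fun h0 => hq₀f₀ (by rw [h0, mul_zero])
          have hq₀0 : q₀ ≠ 0 := fun h0 => hq₀f₀ (by rw [h0, zero_mul])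
          have hβd : β.natDegree = (q₀ * f₀).natDegree - φ.natDegree :=
            natDegree_divByMonic _ hmo
          have hmul : (q₀ * f₀).natDegree = q₀.natDegree + f₀.natDegree :=
            natDegree_mul hq₀0 hf₀0
          have hf₀lt : f₀.natDegree < φ.natDegree :=
            natDegree_lt_natDegree hf₀0 (degree_modByMonic_lt f hmo)
          have hq₀lt : q₀.natDegree < φ.natDegree :=
            natDegree_lt_natDegree hq₀0 (degree_modByMonic_lt q hmo)
          omega
        omega
    -- from key, get w₁ facts
    have hw₁facts : w₁ ≠ 0 ∧ dg μ q + N' * φ.natDegree ≤ w₁.natDegree := by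
      rcases key with hP0 | hPlt
      · rw [hP0, sub_zero] at hIH hW'0
        exact ⟨hW'0, hIH⟩
      · have hw₁eq : w₁ = (w₁ - (q₁ * f₀ + β)) + (q₁ * f₀ + β) := by ring
        have hw₁0 : w₁ ≠ 0 := by
          intro h0
          rw [h0, zero_sub, natDegree_neg] at hPlt
          exact lt_irrefl _ hPlt
        have hw₁d : w₁.natDegree = (w₁ - (q₁ * f₀ + β)).natDegree := by
          have h5 := natDegree_add_eq_left_of_natDegree_lt hPlt
          rwa [show w₁ - (q₁ * f₀ + β) + (q₁ * f₀ + β) = w₁ from by ring] at h5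
        exact ⟨hw₁0, by rw [hw₁d]; exact hIH⟩
    obtain ⟨hw₁0, hw₁ge⟩ := hw₁facts
    have hφw₁ : (φ * w₁).natDegree = φ.natDegree + w₁.natDegree :=
      natDegree_mul hmo.ne_zero hw₁0
    have hw₀lt : w₀.natDegree < (φ * w₁).natDegree := by
      rw [hφw₁]
      by_cases hz : w₀ = 0
      · rw [hz, natDegree_zero]; omega
      have := natDegree_lt_natDegree hz (degree_modByMonic_lt w hmo)
      omega
    have hwdeg : w.natDegree = φ.natDegree + w₁.natDegree := by
      rw [← hdivw, natDegree_add_eq_right_of_natDegree_lt hw₀lt, hφw₁]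
    rw [hwdeg]
    have hexp : (N' + 1) * φ.natDegree = N' * φ.natDegree + φ.natDegree := by ring
    omega

lemma main_ind :
    ∀ (N : ℕ) (f q w e : Polynomial K), f.Monic → f.natDegree = N * φ.natDegree →
      μ f = N • μ φ → q ≠ 0 → q * f = w + e → μ (q * f) < μ e →
      dg μ q + N * φ.natDegree ≤ w.natDegree := by
  intro N
  induction N using Nat.strong_induction_on with
  | _ N IH =>
    intro f q w e hfm hfd hfv hq0 hsum hlt
    have hμq : μ q ≠ ⊤ := S q hq0
    have hμf : μ f ≠ ⊤ := S f hfm.ne_zero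
    obtain ⟨q', eq', hq'sum, hq'lt, hq'0, hq'deg⟩ := dg_spec hμ hμq
    have hmuq' : μ q' = μ q := wit_mu hv hμ hext hq'sum hq'lt
    have hdgq' : dg μ q = dg μ q' := dg_congr hv hμ hext hq'sum hq'lt hμq
    have hsum' : q' * f = w + (e - eq' * f) := by
      have h1 : q' * f = q * f - eq' * f := by rw [hq'sum]; ring
      rw [h1, hsum]; ring
    have hμq'f : μ (q' * f) = μ (q * f) := by
      rw [hμ.2.2.1, hμ.2.2.1, hmuq']
    have hlt' : μ (q' * f) < μ (e - eq' * f) := by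
      rw [hμq'f]
      calc μ (q * f) < min (μ e) (μ (eq' * f)) := by
            refine lt_min hlt ?_
            rw [hμ.2.2.1, hμ.2.2.1]
            exact WithTop.add_lt_add_right hμf hq'lt
        _ ≤ μ (e - eq' * f) := mu_sub_ge hv hμ hext _ _
    have hq'red : q'.natDegree = dg μ q' := by rw [hq'deg, hdgq']
    have := main_core hv hμ hext hmo hmin htop hd S N IH f q' w (e - eq' * f)
      hfm hfd hfv hq'0 hsum' hlt' hq'red
    rwa [← hdgq'] at this

end Main


/-! ### Final assembly lemmas -/

lemma wt_nsmul_ne_top {k : ℕ} {a : WithTop Λ} (ha : a ≠ ⊤) : k • a ≠ ⊤ := by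
  cases a with
  | top => exact absurd rfl ha
  | coe x => rw [wt_nsmul_coe]; exact WithTop.coe_ne_top

section Final

variable (hv : IsVal v) (hμ : IsVal μ) (hext : ExtendsVal v μ)
variable {φ : Polynomial K} (hmo : φ.Monic) (hmin : MuMinimal μ φ) (htop : μ φ ≠ ⊤)
  (hd : 0 < φ.natDegree) (S : ∀ h : Polynomial K, h ≠ 0 → μ h ≠ ⊤)

include hv hμ hext hmo hmin htop hd S

lemma minimal_implies_eq {f : Polynomial K} (hf : f.Monic) (hn : 0 < f.natDegree)
    (hfmin : MuMinimal μ f) :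
    φ.natDegree • μ f = f.natDegree • μ φ := by
  refine le_antisymm (weightA hv hμ hext S hmin hmo f hf) ?_
  have h1 := val_deg_mul hv hμ hext S hf hfmin φ.natDegree (φ ^ f.natDegree)
    (hmo.pow _) (by rw [natDegree_pow, Nat.mul_comm])
  rwa [mu_pow hv hμ hext] at h1

lemma eq_implies_minimal {f : Polynomial K} (hf : f.Monic)
    (heq : φ.natDegree • μ f = f.natDegree • μ φ) : MuMinimal μ f := by
  intro g hg0 hgdeg hdvd
  obtain ⟨c, hc⟩ := hdvd
  rcases hc with ⟨h1, h2⟩ | ⟨_, htopg⟩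
  · have hc0 : c ≠ 0 := by
      rintro rfl
      rw [mul_zero, hμ.1] at h1
      exact S g hg0 h1.symm
    have hμc : μ c ≠ ⊤ := S c hc0
    have hμf : μ f ≠ ⊤ := S f hf.ne_zero
    have hfm : (f ^ φ.natDegree).Monic := hf.pow _
    have hfmd : (f ^ φ.natDegree).natDegree = f.natDegree * φ.natDegree := by
      rw [natDegree_pow, Nat.mul_comm]
    have hfmv : μ (f ^ φ.natDegree) = f.natDegree • μ φ := by
      rw [mu_pow hv hμ hext, heq]
    have hcfm : μ (c * f ^ φ.natDegree) ≠ ⊤ := by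
      rw [hμ.2.2.1]
      exact WithTop.add_ne_top.mpr ⟨hμc, by rw [hfmv]; exact wt_nsmul_ne_top htop⟩
    obtain ⟨w, e, hwsum, hwlt, hw0, hwdeg⟩ := dg_spec hμ hcfm
    have hlow := main_ind hv hμ hext hmo hmin htop hd S f.natDegree
      (f ^ φ.natDegree) c w e hfm hfmd hfmv hc0 hwsum hwlt
    rw [hwdeg] at hlow
    have hm1 : c * f ^ φ.natDegree = (c * f) * f ^ (φ.natDegree - 1) := by
      conv_lhs => rw [show φ.natDegree = 1 + (φ.natDegree - 1) by omega]
      rw [pow_add, pow_one]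
      ring
    have hμcf : μ (c * f) ≠ ⊤ := by
      rw [hμ.2.2.1]
      exact WithTop.add_ne_top.mpr ⟨hμc, hμf⟩
    have hμfp : μ (f ^ (φ.natDegree - 1)) ≠ ⊤ := by
      rw [mu_pow hv hμ hext]
      exact wt_nsmul_ne_top hμf
    have hup : dg μ (c * f ^ φ.natDegree) ≤ dg μ (c * f) + (φ.natDegree - 1) * f.natDegree := by
      rw [hm1]
      refine le_trans (dg_mul_le hv hμ hext hμcf hμfp) ?_
      have h3 := dg_le_natDegree hμ hμfp
      rw [natDegree_pow] at h3
      omega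
    have hgwit : c * f = g + (f * c - g) := by ring
    have hglt : μ (c * f) < μ (f * c - g) := by rw [mul_comm]; exact h2
    have hdgcf : dg μ (c * f) ≤ g.natDegree := dg_le hgwit hglt hg0
    have hgn : g.natDegree < f.natDegree := natDegree_lt_natDegree hg0 hgdeg
    have hnm : f.natDegree * φ.natDegree = (φ.natDegree - 1) * f.natDegree + f.natDegree := by
      have h4 : φ.natDegree = (φ.natDegree - 1) + 1 := by omega
      calc f.natDegree * φ.natDegree = φ.natDegree * f.natDegree := by ring
        _ = ((φ.natDegree - 1) + 1) * f.natDegree := by rw [← h4]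
        _ = (φ.natDegree - 1) * f.natDegree + f.natDegree := by ring
    omega
  · exact S g hg0 htopg

end Final

end WB

end AuxWB

/-- if `φ` is a key polynomial for `μ` of minimal degree, then for every monic
nonconstant `f`, `μ(f)/deg f ≤ μ(φ)/deg φ` (stated by cross-multiplication), with equality
if and only if `f` is `μ`-minimal. -/
theorem weight_bound {K : Type*} [Field K] {Λ : Type*}
    [AddCommGroup Λ] [LinearOrder Λ] [IsOrderedAddMonoid Λ] (v : K → WithTop Λ) (hv : IsVal v)
    (μ : Polynomial K → WithTop Λ) (hμ : IsVal μ) (hext : ExtendsVal v μ)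
    (φ : Polynomial K) (hφ : MinKeyPol μ φ) :
    ∀ f : Polynomial K, f.Monic → 0 < f.natDegree →
      φ.natDegree • μ f ≤ f.natDegree • μ φ ∧
      (φ.natDegree • μ f = f.natDegree • μ φ ↔ MuMinimal μ f) := by
  obtain ⟨⟨hmo, hmin, hirr⟩, -⟩ := hφ
  have htop : μ φ ≠ ⊤ := hirr.1
  have hd : 0 < φ.natDegree := by
    by_contra hc
    push_neg at hc
    have h0 : φ.natDegree = 0 := by omega
    have hφ1 : φ = 1 := hmo.natDegree_eq_zero.mp h0
    refine hirr.2.1 ⟨1, Or.inl ⟨by rw [hφ1, mul_one], ?_⟩⟩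
    rw [hφ1, mul_one, sub_self, hμ.1, hμ.2.1]
    exact lt_top_iff_ne_top.mpr (by simp)
  have S : ∀ h : Polynomial K, h ≠ 0 → μ h ≠ ⊤ :=
    fun h h0 => WB.mu_ne_top hv hμ hext hmo hmin htop hd h0
  intro f hf hn
  refine ⟨WB.weightA hv hμ hext S hmin hmo f hf, ?_, ?_⟩
  · exact fun heq => WB.eq_implies_minimal hv hμ hext hmo hmin htop hd S hf heq
  · exact fun hfmin => WB.minimal_implies_eq hv hμ hext hmo hmin htop hd S hf hn hfmin
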